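/- If the Conrad filter N of an MV-algebra is proper, then there is exactly one maximal proper implication filter, namely the unique maximal implication filter containing N. -/

import Mathlib

/-- An MV-algebra `(α, ⊕, ¬, 0)` with the standard axioms. -/
class MV (α : Type*) extends Add α, Neg α, Zero α where
  add_assoc : ∀ a b c : α, a + (b + c) = (a + b) + c
  add_comm : ∀ a b : α, a + b = b + a
  add_zero : ∀ a : α, a + 0 = a
  neg_neg : ∀ a : α, - -a = a
  add_neg_zero : ∀ a : α, a + -(0 : α) = -(0 : α)
  luk : ∀ a b : α, -(-a + b) + b = -(-b + a) + a

namespace MV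

variable {α : Type*} [MV α]

/-- The top element `1 = ¬0`. -/
def one (α : Type*) [MV α] : α := -(0 : α)

/-- Implication `x → y = ¬x ⊕ y`. -/
def imp (a b : α) : α := -a + b

/-- Strong conjunction `x ⊗ y = ¬(¬x ⊕ ¬y)`. -/
def otimes (a b : α) : α := -(-a + -b)

/-- Join `x ∨ y = (x → y) → y`. -/
def sup (a b : α) : α := imp (imp a b) b

/-- Meet `x ∧ y = ¬(¬x ∨ ¬y)`. -/
def inf (a b : α) : α := -(sup (-a) (-b))

/-- Order: `x ≤ y` iff `x → y = 1`. -/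
def le (a b : α) : Prop := imp a b = one α

/-- Strict order. -/
def lt (a b : α) : Prop := le a b ∧ a ≠ b

/-- `n`-fold `⊗`-power. -/
def pow (a : α) : ℕ → α
  | 0 => one α
  | n + 1 => otimes a (pow a n)

/-- An implication filter: a lattice filter closed under `⊗`. -/
def IsImpFilter (F : Set α) : Prop :=
  one α ∈ F ∧ (∀ x ∈ F, ∀ y : α, le x y → y ∈ F) ∧
    (∀ x ∈ F, ∀ y ∈ F, inf x y ∈ F) ∧ (∀ x ∈ F, ∀ y ∈ F, otimes x y ∈ F)

/-- A prime implication filter: proper and `x ∨ y ∈ F → x ∈ F ∨ y ∈ F`. -/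
def IsPrime (F : Set α) : Prop :=
  IsImpFilter F ∧ F ≠ Set.univ ∧ ∀ x y : α, sup x y ∈ F → x ∈ F ∨ y ∈ F

/-- A minimal prime implication filter. -/
def IsMinimalPrime (F : Set α) : Prop :=
  IsPrime F ∧ ∀ G : Set α, IsPrime G → G ⊆ F → G = F

/-- A maximal proper implication filter. -/
def IsMaximal (F : Set α) : Prop :=
  IsImpFilter F ∧ F ≠ Set.univ ∧
    ∀ G : Set α, IsImpFilter G → G ≠ Set.univ → F ⊆ G → G = F

/-- A counit: `u < 1` joining to `1` with some `v < 1`. -/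
def IsCounit (u : α) : Prop :=
  lt u (one α) ∧ ∃ v : α, lt v (one α) ∧ sup u v = one α

/-- The implication filter generated by a set. -/
def gen (S : Set α) : Set α := ⋂₀ {F : Set α | IsImpFilter F ∧ S ⊆ F}

/-- The Conrad filter: the implication filter generated by all counits. -/
def conrad (α : Type*) [MV α] : Set α := gen {u : α | IsCounit u}

/-- The localizing filter `ℓ(P)`, generated by `{x → p : p ∈ P, x ∉ P}`. -/
def locFilter (P : Set α) : Set α :=
  gen {z : α | ∃ x : α, x ∉ P ∧ ∃ p ∈ P, z = imp x p}

end MV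

namespace MV

variable {α : Type*} [MV α]

lemma add_one' (a : α) : a + one α = one α := add_neg_zero a
lemma one_add' (a : α) : one α + a = one α := by rw [add_comm]; exact add_neg_zero a
lemma zero_add' (a : α) : (0 : α) + a = a := by rw [add_comm]; exact add_zero a
lemma neg_one' : -(one α) = (0 : α) := neg_neg 0
lemma add_left_comm' (a b c : α) : a + (b + c) = b + (a + c) := by
  rw [add_assoc, MV.add_comm a b, ← add_assoc]

lemma neg_add_self' (a : α) : -a + a = one α := by
  have h := luk (one α) a
  rw [neg_one', zero_add', add_one'] at h
  exact h

lemma le_refl' (a : α) : le a a := neg_add_self' a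
lemma le_top' (a : α) : le a (one α) := add_one' (-a)
lemma zero_le' (a : α) : le 0 a := by
  show -(0:α) + a = one α
  rw [add_comm]; exact add_neg_zero a

lemma sup_comm' (a b : α) : sup a b = sup b a := luk a b

lemma sup_eq_right' {a b : α} (h : le a b) : sup a b = b := by
  have h' : -a + b = one α := h
  show -(-a + b) + b = b
  rw [h', neg_one', zero_add']

lemma ex_add {a b : α} (h : le a b) : -(-b + a) + a = b :=
  (sup_comm' b a).trans (sup_eq_right' h)

lemma le_antisymm' {a b : α} (h1 : le a b) (h2 : le b a) : a = b := by
  have e1 : sup b a = b := (sup_comm' b a).trans (sup_eq_right' h1)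
  have e2 : sup b a = a := sup_eq_right' h2
  exact e2.symm.trans e1

lemma le_trans' {a b c : α} (h1 : le a b) (h2 : le b c) : le a c := by
  have h1' : -a + b = one α := h1
  show -a + c = one α
  calc -a + c = -a + (-(-c + b) + b) := by rw [ex_add h2]
    _ = -(-c + b) + (-a + b) := add_left_comm' _ _ _
    _ = -(-c + b) + one α := by rw [h1']
    _ = one α := add_one' _

lemma add_le_add_left' {a b : α} (h : le a b) (c : α) : le (c + a) (c + b) := by
  show -(c + a) + (c + b) = one α
  calc -(c+a) + (c+b) = -(c+a) + (c + (-(-b+a) + a)) := by rw [ex_add h]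
    _ = -(c+a) + (-(-b+a) + (c + a)) := by rw [add_left_comm' c _ a]
    _ = -(-b+a) + (-(c+a) + (c+a)) := add_left_comm' _ _ _
    _ = -(-b+a) + one α := by rw [neg_add_self']
    _ = one α := add_one' _

lemma neg_le_neg' {a b : α} (h : le a b) : le (-b) (-a) := by
  show -(-b) + -a = one α
  rw [neg_neg, add_comm]
  exact h

lemma le_add_left' (a b : α) : le b (a + b) := by
  show -b + (a + b) = one α
  calc -b + (a + b) = a + (-b + b) := add_left_comm' _ _ _
    _ = a + one α := by rw [neg_add_self']
    _ = one α := add_one' _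

lemma le_sup_left' (a b : α) : le a (sup a b) := by
  show -a + (-(-a + b) + b) = one α
  calc -a + (-(-a+b) + b) = -(-a+b) + (-a + b) := add_left_comm' _ _ _
    _ = one α := neg_add_self' _

lemma le_sup_right' (a b : α) : le b (sup a b) := le_add_left' _ _

lemma one_imp' (a : α) : imp (one α) a = a := by
  show -(one α) + a = a
  rw [neg_one', zero_add']

lemma imp_le_imp_left' {a c : α} (h : le a c) (b : α) : le (imp c b) (imp a b) := by
  have h2 := add_le_add_left' (neg_le_neg' h) b
  show le (-c + b) (-a + b)
  rw [MV.add_comm (-c) b, MV.add_comm (-a) b]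
  exact h2

lemma sup_le' {a b c : α} (h1 : le a c) (h2 : le b c) : le (sup a b) c := by
  have s1 : le (sup a b) (sup c b) := imp_le_imp_left' (imp_le_imp_left' h1 b) b
  have s2 : sup c b = c := (sup_comm' c b).trans (sup_eq_right' h2)
  rw [s2] at s1
  exact s1

lemma eq_one_of_one_le' {a : α} (h : le (one α) a) : a = one α := le_antisymm' (le_top' a) h

lemma neg_otimes' (a b : α) : -(otimes a b) = -a + -b := neg_neg _

lemma otimes_assoc' (a b c : α) : otimes (otimes a b) c = otimes a (otimes b c) := by
  show -(-(otimes a b) + -c) = -(-a + -(otimes b c))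
  rw [neg_otimes', neg_otimes', add_assoc]

lemma imp_otimes' (a b c : α) : imp (otimes a b) c = imp a (imp b c) := by
  show -(otimes a b) + c = -a + (-b + c)
  rw [neg_otimes', ← add_assoc]

lemma otimes_le' {a b c : α} (h : le a (imp b c)) : le (otimes a b) c := by
  show imp (otimes a b) c = one α
  rw [imp_otimes']
  exact h

lemma otimes_imp_le' (p q : α) : le (otimes p (imp p q)) q :=
  otimes_le' (le_sup_left' p q)

lemma imp_sup_left' (a b : α) : imp (sup a b) a = imp b a := by
  have h := luk a (-b + a)
  have e1 : -a + (-b + a) = one α := by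
    calc -a + (-b + a) = -b + (-a + a) := add_left_comm' _ _ _
      _ = -b + one α := by rw [neg_add_self']
      _ = one α := add_one' _
  rw [e1, neg_one', zero_add'] at h
  have e2 : -(-b + a) + a = sup a b := sup_comm' b a
  rw [e2] at h
  exact h.symm

lemma neg_imp_le_neg' (a b : α) : le (-(-a + b)) (-b) := neg_le_neg' (le_add_left' (-a) b)

lemma imp_otimes_sup' (a b : α) : otimes (imp a b) (sup a b) = b := by
  have h2 := ex_add (neg_imp_le_neg' a b)
  rw [neg_neg] at h2
  -- h2 : -(b + -(-a + b)) + -(-a + b) = -b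
  have e : -(-a+b) + -(-(-a+b) + b) = -b := by
    rw [MV.add_comm (-(-a+b)) b, MV.add_comm (-(-a+b)) (-(b + -(-a+b)))]
    exact h2
  show -(-(-a + b) + -(-(-a + b) + b)) = b
  rw [e, neg_neg]

lemma otimes_sup_neg' (a b : α) : otimes (sup a b) (-a) = otimes b (-a) := by
  show -(-(sup a b) + -(-a)) = -(-b + -(-a))
  rw [neg_neg]
  have e : -(sup a b) + a = -b + a := imp_sup_left' a b
  rw [e]

lemma absorb' (a b : α) : otimes (imp a b) (otimes b (-a)) = otimes b (-a) := by
  rw [← otimes_sup_neg' a b, ← otimes_assoc', imp_otimes_sup']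
  exact (otimes_sup_neg' a b).symm

lemma imp_imp_absorb' (a b : α) : imp (imp a b) (imp b a) = imp b a := by
  have h := congrArg (fun x => -x) (absorb' a b)
  rw [neg_otimes', neg_otimes', neg_neg] at h
  exact h

lemma prelinear' (a b : α) : sup (imp a b) (imp b a) = one α := by
  show imp (imp (imp a b) (imp b a)) (imp b a) = one α
  rw [imp_imp_absorb']
  exact neg_add_self' _

/-! ### Filters -/

lemma mem_gen' {S : Set α} {x : α} :
    x ∈ gen S ↔ ∀ F : Set α, IsImpFilter F → S ⊆ F → x ∈ F := by
  constructor
  · intro hx F h1 h2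
    exact hx F ⟨h1, h2⟩
  · intro hx F hF
    exact hx F hF.1 hF.2

lemma IsImpFilter.mem_of_le' {F : Set α} (hF : IsImpFilter F) {x y : α}
    (hx : x ∈ F) (h : le x y) : y ∈ F := hF.2.1 x hx y h

lemma IsImpFilter.otimes_mem' {F : Set α} (hF : IsImpFilter F) {x y : α}
    (hx : x ∈ F) (hy : y ∈ F) : otimes x y ∈ F := hF.2.2.2 x hx y hy

lemma IsImpFilter.mp' {F : Set α} (hF : IsImpFilter F) {p q : α}
    (hp : p ∈ F) (hpq : imp p q ∈ F) : q ∈ F :=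
  hF.mem_of_le' (hF.otimes_mem' hp hpq) (otimes_imp_le' p q)

lemma isImpFilter_gen (S : Set α) : IsImpFilter (gen S) := by
  refine ⟨mem_gen'.mpr fun F hF _ => hF.1, ?_, ?_, ?_⟩
  · intro x hx y hxy
    rw [mem_gen'] at hx ⊢
    exact fun F h1 h2 => h1.2.1 x (hx F h1 h2) y hxy
  · intro x hx y hy
    rw [mem_gen'] at hx hy ⊢
    exact fun F h1 h2 => h1.2.2.1 x (hx F h1 h2) y (hy F h1 h2)
  · intro x hx y hy
    rw [mem_gen'] at hx hy ⊢
    exact fun F h1 h2 => h1.2.2.2 x (hx F h1 h2) y (hy F h1 h2)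

lemma subset_gen' (S : Set α) : S ⊆ gen S := fun _ hx => mem_gen'.mpr fun _ _ hSF => hSF hx

lemma gen_subset' {S F : Set α} (hF : IsImpFilter F) (h : S ⊆ F) : gen S ⊆ F :=
  fun _ hx => mem_gen'.mp hx F hF h

lemma isImpFilter_conrad : IsImpFilter (conrad α) := isImpFilter_gen _

lemma counit_mem' {u : α} (hu : IsCounit u) : u ∈ conrad α := subset_gen' _ hu

lemma eq_univ_of_zero_mem' {F : Set α} (hF : IsImpFilter F) (h0 : (0:α) ∈ F) :
    F = Set.univ :=
  Set.eq_univ_of_forall fun x => hF.mem_of_le' h0 (zero_le' x)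

lemma one_ne_of_not_mem' {F : Set α} (hF : IsImpFilter F) {u : α} (hu : u ∉ F) :
    u ≠ one α := fun e => hu (e ▸ hF.1)

/-- Lemma A': a filter avoiding some counit is contained in the Conrad filter. -/
lemma subset_conrad' {M : Set α} (hM : IsImpFilter M) {u : α} (hu : IsCounit u)
    (huM : u ∉ M) : M ⊆ conrad α := by
  intro p hp
  obtain ⟨⟨hu1, hune⟩, v, ⟨hv1, hvne⟩, huv⟩ := hu
  by_cases hp1 : p = one α
  · exact hp1 ▸ (isImpFilter_conrad (α := α)).1
  by_cases hsup : sup p u = one α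
  · exact counit_mem' ⟨⟨le_top' p, hp1⟩, u, ⟨le_top' u, one_ne_of_not_mem' hM huM⟩, hsup⟩
  have hj : sup (sup p u) v = one α := by
    have h1 : le (sup u v) (sup (sup p u) v) :=
      sup_le' (le_trans' (le_sup_right' p u) (le_sup_left' (sup p u) v))
        (le_sup_right' (sup p u) v)
    rw [huv] at h1
    exact eq_one_of_one_le' h1
  have hPU : sup p u ∈ conrad α :=
    counit_mem' ⟨⟨le_top' _, hsup⟩, v, ⟨hv1, hvne⟩, hj⟩
  by_cases hip : imp u p = one α
  · have e1 : sup u p = p := by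
      show imp (imp u p) p = p
      rw [hip]
      exact one_imp' p
    have e2 : sup p u = p := (sup_comm' p u).trans e1
    rw [e2] at hPU
    exact hPU
  · have hpu_not : imp p u ∉ M := fun hmem => huM (hM.mp' hp hmem)
    have hIC : imp u p ∈ conrad α := counit_mem' ⟨⟨le_top' _, hip⟩, imp p u,
      ⟨le_top' _, one_ne_of_not_mem' hM hpu_not⟩, prelinear' u p⟩
    have hprod : otimes (sup p u) (imp u p) ∈ conrad α :=
      (isImpFilter_conrad (α := α)).otimes_mem' hPU hIC
    have hle : le (otimes (sup p u) (imp u p)) p := by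
      apply otimes_le'
      show le (sup p u) (sup u p)
      rw [sup_comm' p u]
      exact le_refl' _
    exact (isImpFilter_conrad (α := α)).mem_of_le' hprod hle

/-- Lemma A: every maximal filter contains the (proper) Conrad filter. -/
lemma conrad_subset_of_maximal' (h : conrad α ≠ Set.univ) {M : Set α}
    (hM : IsMaximal M) : conrad α ⊆ M := by
  obtain ⟨hMf, hMne, hMmax⟩ := hM
  by_cases hc : ∀ u : α, IsCounit u → u ∈ M
  · exact gen_subset' hMf hc
  · push_neg at hc
    obtain ⟨u, hu, huM⟩ := hc
    have hsub : M ⊆ conrad α := subset_conrad' hMf hu huM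
    have heq : conrad α = M := hMmax _ isImpFilter_conrad h hsub
    exact absurd (heq ▸ counit_mem' hu) huM

lemma maximal_unique' (h : conrad α ≠ Set.univ) {M₁ M₂ : Set α}
    (h1 : IsMaximal M₁) (h2 : IsMaximal M₂) : M₁ = M₂ := by
  by_contra hne
  obtain ⟨h1f, h1ne, h1max⟩ := h1
  obtain ⟨h2f, h2ne, h2max⟩ := h2
  have hns1 : ¬ M₁ ⊆ M₂ := fun hss => hne (h1max M₂ h2f h2ne hss).symm
  have hns2 : ¬ M₂ ⊆ M₁ := fun hss => hne (h2max M₁ h1f h1ne hss)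
  obtain ⟨a, ha1, ha2⟩ := Set.not_subset.mp hns1
  obtain ⟨b, hb1, hb2⟩ := Set.not_subset.mp hns2
  have hu : imp a b ∉ M₁ := fun hm => hb2 (h1f.mp' ha1 hm)
  have hv : imp b a ∉ M₂ := fun hm => ha2 (h2f.mp' hb1 hm)
  have hcu : IsCounit (imp a b) :=
    ⟨⟨le_top' _, one_ne_of_not_mem' h1f hu⟩, imp b a,
      ⟨le_top' _, one_ne_of_not_mem' h2f hv⟩, prelinear' a b⟩
  exact hu (conrad_subset_of_maximal' h ⟨h1f, h1ne, h1max⟩ (counit_mem' hcu))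

lemma exists_maximal' (h : conrad α ≠ Set.univ) : ∃ M : Set α, IsMaximal M := by
  set S : Set (Set α) := {F | IsImpFilter F ∧ F ≠ Set.univ ∧ conrad α ⊆ F} with hS
  have hconradS : conrad α ∈ S := ⟨isImpFilter_conrad, h, subset_refl _⟩
  have hzorn : ∀ c ⊆ S, IsChain (· ⊆ ·) c → c.Nonempty → ∃ ub ∈ S, ∀ s ∈ c, s ⊆ ub := by
    intro c hcS hchain hne
    obtain ⟨F0, hF0⟩ := hne
    refine ⟨⋃₀ c, ⟨⟨?_, ?_, ?_, ?_⟩, ?_, ?_⟩, fun s hs => Set.subset_sUnion_of_mem hs⟩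
    · exact ⟨F0, hF0, (hcS hF0).1.1⟩
    · rintro x ⟨F, hFc, hxF⟩ y hxy
      exact ⟨F, hFc, (hcS hFc).1.2.1 x hxF y hxy⟩
    · rintro x ⟨F, hFc, hxF⟩ y ⟨G, hGc, hyG⟩
      rcases hchain.total hFc hGc with hFG | hGF
      · exact ⟨G, hGc, (hcS hGc).1.2.2.1 x (hFG hxF) y hyG⟩
      · exact ⟨F, hFc, (hcS hFc).1.2.2.1 x hxF y (hGF hyG)⟩
    · rintro x ⟨F, hFc, hxF⟩ y ⟨G, hGc, hyG⟩
      rcases hchain.total hFc hGc with hFG | hGF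
      · exact ⟨G, hGc, (hcS hGc).1.2.2.2 x (hFG hxF) y hyG⟩
      · exact ⟨F, hFc, (hcS hFc).1.2.2.2 x hxF y (hGF hyG)⟩
    · intro he
      have h0 : (0:α) ∈ ⋃₀ c := he ▸ Set.mem_univ _
      obtain ⟨F, hFc, h0F⟩ := h0
      exact (hcS hFc).2.1 (eq_univ_of_zero_mem' (hcS hFc).1 h0F)
    · exact Set.Subset.trans (hcS hF0).2.2 (Set.subset_sUnion_of_mem hF0)
  obtain ⟨M, _, hMax⟩ := zorn_subset_nonempty S hzorn _ hconradS
  have hMmem : M ∈ S := hMax.prop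
  refine ⟨M, hMmem.1, hMmem.2.1, ?_⟩
  intro G hG hGne hMG
  have hGS : G ∈ S := ⟨hG, hGne, Set.Subset.trans hMmem.2.2 hMG⟩
  exact Set.Subset.antisymm (hMax.le_of_ge hGS hMG) hMG

end MV


open MV
/-- If the Conrad filter is proper, there is exactly one maximal proper
implication filter, namely the unique maximal one containing `N`. -/
theorem unique_maximal_of_conrad_proper {α : Type*} [MV α] (h : conrad α ≠ Set.univ) :
    (∃! M : Set α, IsMaximal M) ∧ ∀ M : Set α, IsMaximal M → conrad α ⊆ M := by
  obtain ⟨M, hM⟩ := exists_maximal' h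
  exact ⟨⟨M, hM, fun N hN => maximal_unique' h hN hM⟩,
    fun N hN => conrad_subset_of_maximal' h hN⟩
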